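/- Let d be a positive integer, α ∈ [0, d) and β ∈ (d, ∞). Then for all x ∈ ℝ^d, ∫_{ℝ^d \ {x}} ⟨y⟩^{-β} |x − y|^{-α} dy ≤ K, where K is the explicit constant K = (2 π^{d/2} / Γ(d/2)) · [ 1/(d − α) + ∫₀^∞ r^{d−1} (1 + r²)^{−β/2} dr ]. -/

import Mathlib

open MeasureTheory Real

/-- The "inhomogeneous norm" (Japanese bracket) `⟨y⟩ = (1 + |y|²)^{1/2}`. -/
noncomputable def jb {n : ℕ} (y : EuclideanSpace ℝ (Fin n)) : ℝ :=
  (1 + ‖y‖ ^ 2) ^ ((1 : ℝ) / 2)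

open Set Metric ENNReal in
/-- Polar-coordinates formula for lower Lebesgue integrals of radial functions. -/
lemma my_lintegral_fun_norm_addHaar {E : Type*} [NormedAddCommGroup E] [NormedSpace ℝ E]
    [MeasurableSpace E] [BorelSpace E] [Nontrivial E] [FiniteDimensional ℝ E]
    (μ : Measure E) [μ.IsAddHaarMeasure] (f : ℝ → ℝ≥0∞) (hf : Measurable f) :
    ∫⁻ x, f ‖x‖ ∂μ = (Module.finrank ℝ E) * μ (ball 0 1) *
      ∫⁻ y in Ioi (0 : ℝ), ENNReal.ofReal (y ^ (Module.finrank ℝ E - 1)) * f y := by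
  have hm2 : Measurable fun p : sphere (0:E) 1 × Ioi (0:ℝ) => f p.2.1 :=
    hf.comp (measurable_subtype_coe.comp measurable_snd)
  have hm1 : Measurable fun r : Ioi (0:ℝ) => f r.1 := hf.comp measurable_subtype_coe
  have h1 : ∫⁻ x, f ‖x‖ ∂μ = ∫⁻ x in ({0}ᶜ : Set E), f ‖x‖ ∂μ := by
    rw [restrict_compl_singleton]
  have h2 : ∫⁻ x in ({0}ᶜ : Set E), f ‖x‖ ∂μ
      = ∫⁻ x : ({0}ᶜ : Set E), f ‖x.1‖ ∂(μ.comap (↑)) := by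
    rw [lintegral_subtype_comap (measurableSet_singleton (0:E)).compl (fun x => f ‖x‖)]
  have h3 : ∫⁻ x : ({0}ᶜ : Set E), f ‖x.1‖ ∂(μ.comap (↑))
      = ∫⁻ p : sphere (0:E) 1 × Ioi (0:ℝ), f p.2
          ∂(μ.toSphere.prod (.volumeIoiPow (Module.finrank ℝ E - 1))) := by
    rw [← μ.measurePreserving_homeomorphUnitSphereProd.lintegral_comp
      (f := fun p : sphere (0:E) 1 × Ioi (0:ℝ) => f p.2) hm2]
    simp
  have h4 : ∫⁻ p : sphere (0:E) 1 × Ioi (0:ℝ), f p.2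
          ∂(μ.toSphere.prod (.volumeIoiPow (Module.finrank ℝ E - 1)))
      = μ.toSphere univ * ∫⁻ r : Ioi (0:ℝ), f r
          ∂(.volumeIoiPow (Module.finrank ℝ E - 1)) := by
    rw [lintegral_prod _ hm2.aemeasurable]
    simp [lintegral_const, mul_comm]
  have h5 : ∫⁻ r : Ioi (0:ℝ), f r ∂(Measure.volumeIoiPow (Module.finrank ℝ E - 1))
      = ∫⁻ y in Ioi (0:ℝ), ENNReal.ofReal (y ^ (Module.finrank ℝ E - 1)) * f y := by
    rw [Measure.volumeIoiPow, lintegral_withDensity_eq_lintegral_mul _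
      ((measurable_subtype_coe.pow_const _).ennreal_ofReal) hm1]
    exact lintegral_subtype_comap measurableSet_Ioi
      (fun y => ENNReal.ofReal (y ^ (Module.finrank ℝ E - 1)) * f y)
  rw [h1, h2, h3, h4, h5, μ.toSphere_apply_univ]

open Set Metric ENNReal in
lemma my_const_eq (d : ℕ) (hd : 0 < d) :
    (d : ℝ≥0∞) * volume (ball (0 : EuclideanSpace ℝ (Fin d)) 1)
      = ENNReal.ofReal (2 * Real.pi ^ ((d : ℝ) / 2) / Real.Gamma ((d : ℝ) / 2)) := by
  haveI : Nonempty (Fin d) := ⟨⟨0, hd⟩⟩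
  rw [EuclideanSpace.volume_ball]
  have hd2 : (0:ℝ) < (d:ℝ)/2 := by positivity
  have hΓ : 0 < Real.Gamma ((d:ℝ)/2) := Real.Gamma_pos_of_pos hd2
  have hsq : Real.sqrt π ^ (Fintype.card (Fin d)) = Real.pi ^ ((d:ℝ)/2) := by
    rw [Fintype.card_fin, Real.sqrt_eq_rpow, ← Real.rpow_natCast (π ^ ((1:ℝ)/2)) d,
      ← Real.rpow_mul pi_pos.le]
    ring_nf
  have hΓ1 : Real.Gamma ((Fintype.card (Fin d) : ℝ) / 2 + 1)
      = ((d:ℝ)/2) * Real.Gamma ((d:ℝ)/2) := by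
    rw [Fintype.card_fin, Real.Gamma_add_one hd2.ne']
  rw [ENNReal.ofReal_one, one_pow, one_mul, hΓ1, hsq]
  rw [← ENNReal.ofReal_natCast d, ← ENNReal.ofReal_mul (by positivity)]
  congr 1
  field_simp

open Set Metric ENNReal in
lemma my_oneD_integrable (d : ℕ) (hd : 0 < d) (β : ℝ) (hβ : (d : ℝ) < β) :
    IntegrableOn (fun r : ℝ => r ^ ((d:ℝ) - 1) * (1 + r ^ 2) ^ (-β / 2)) (Ioi 0) := by
  have hmeas : AEStronglyMeasurable (fun r : ℝ => r ^ ((d:ℝ) - 1) * (1 + r ^ 2) ^ (-β / 2))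
      (volume : Measure ℝ) := by
    apply Measurable.aestronglyMeasurable
    fun_prop
  have hβ0 : (0:ℝ) < β := lt_of_le_of_lt (by positivity) hβ
  have hd1 : (0:ℝ) ≤ (d:ℝ) - 1 := by
    have : (1:ℝ) ≤ d := by exact_mod_cast hd
    linarith
  rw [← Ioc_union_Ioi_eq_Ioi (zero_le_one)]
  apply IntegrableOn.union
  · apply Measure.integrableOn_of_bounded (M := 1) measure_Ioc_lt_top.ne hmeas
    filter_upwards [ae_restrict_mem measurableSet_Ioc] with r hr
    have hr0 : 0 < r := hr.1
    have h1 : r ^ ((d:ℝ) - 1) ≤ 1 := Real.rpow_le_one hr0.le hr.2 hd1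
    have h2 : (1 + r ^ 2) ^ (-β / 2) ≤ 1 :=
      Real.rpow_le_one_of_one_le_of_nonpos (by nlinarith) (by linarith)
    have hpos2 : 0 ≤ (1 + r ^ 2) ^ (-β / 2) := Real.rpow_nonneg (by nlinarith) _
    rw [Real.norm_eq_abs, abs_of_nonneg (by positivity)]
    calc r ^ ((d:ℝ) - 1) * (1 + r ^ 2) ^ (-β / 2) ≤ 1 * 1 :=
          mul_le_mul h1 h2 hpos2 zero_le_one
      _ = 1 := by ring
  · have hint : IntegrableOn (fun r : ℝ => r ^ ((d:ℝ) - 1 - β)) (Ioi 1) :=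
      integrableOn_Ioi_rpow_of_lt (by linarith) zero_lt_one
    apply hint.mono' hmeas.restrict
    filter_upwards [ae_restrict_mem measurableSet_Ioi] with r hr
    have hr1 : (1:ℝ) < r := hr
    have hr0 : (0:ℝ) < r := lt_trans zero_lt_one hr1
    rw [Real.norm_eq_abs, abs_of_nonneg (by positivity)]
    have h2 : (1 + r ^ 2) ^ (-β / 2) ≤ (r ^ 2) ^ (-β / 2) :=
      Real.rpow_le_rpow_of_nonpos (by positivity) (by nlinarith) (by linarith)
    have h3 : ((r:ℝ) ^ 2) ^ (-β / 2) = r ^ (-β) := by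
      rw [← Real.rpow_natCast r 2, ← Real.rpow_mul hr0.le]
      congr 1
      ring
    calc r ^ ((d:ℝ) - 1) * (1 + r ^ 2) ^ (-β / 2)
        ≤ r ^ ((d:ℝ) - 1) * (r ^ 2) ^ (-β / 2) :=
          mul_le_mul_of_nonneg_left h2 (Real.rpow_nonneg hr0.le _)
      _ = r ^ ((d:ℝ) - 1 - β) := by rw [h3, ← Real.rpow_add hr0]; ring_nf

open Set Metric ENNReal in
lemma my_segment_eval (d : ℕ) (α : ℝ) (hαd : α < d) :
    ∫⁻ y in Ioo (0:ℝ) 1, ENNReal.ofReal (y ^ ((d:ℝ) - 1 - α))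
      = ENNReal.ofReal (1 / ((d:ℝ) - α)) := by
  have hc : (-1:ℝ) < (d:ℝ) - 1 - α := by linarith
  have hInt : IntegrableOn (fun y : ℝ => y ^ ((d:ℝ) - 1 - α)) (Ioo 0 1) := by
    have := (intervalIntegral.intervalIntegrable_rpow' (a := 0) (b := 1) hc)
    rw [intervalIntegrable_iff_integrableOn_Ioc_of_le zero_le_one] at this
    exact this.mono_set Ioo_subset_Ioc_self
  rw [← ofReal_integral_eq_lintegral_ofReal hInt]
  · congr 1
    have : ∫ y in Ioo (0:ℝ) 1, y ^ ((d:ℝ) - 1 - α)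
        = ∫ y in (0:ℝ)..1, y ^ ((d:ℝ) - 1 - α) := by
      rw [intervalIntegral.integral_of_le zero_le_one,
        setIntegral_congr_set Ioo_ae_eq_Ioc]
    rw [this, integral_rpow (Or.inl hc)]
    rw [Real.one_rpow, Real.zero_rpow (by linarith)]
    congr 1 <;> ring_nf
  · filter_upwards [ae_restrict_mem measurableSet_Ioo] with y hy
    exact Real.rpow_nonneg hy.1.le _

/-- For `α ∈ [0, d)` and `β ∈ (d, ∞)`, for all `x ∈ ℝ^d` the integral
`∫_{ℝ^d \ {x}} ⟨y⟩^{-β} |x − y|^{-α} dy` is at most the explicit constant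
`K = (2 π^{d/2} / Γ(d/2)) · [ 1/(d − α) + ∫₀^∞ r^{d−1} (1 + r²)^{−β/2} dr ]`. -/
theorem stmt1 (d : ℕ) (hd : 0 < d) (α β : ℝ) (hα0 : 0 ≤ α) (hαd : α < d) (hβ : (d : ℝ) < β) :
    ∀ x : EuclideanSpace ℝ (Fin d),
      (∫⁻ y in ({x}ᶜ : Set (EuclideanSpace ℝ (Fin d))),
        ENNReal.ofReal (jb y ^ (-β) * ‖x - y‖ ^ (-α)))
      ≤ ENNReal.ofReal
          ((2 * Real.pi ^ ((d : ℝ) / 2) / Real.Gamma ((d : ℝ) / 2)) *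
            (1 / ((d : ℝ) - α) +
              ∫ r in Set.Ioi (0 : ℝ), r ^ ((d : ℝ) - 1) * (1 + r ^ 2) ^ (-β / 2))) := by
  intro x
  haveI : Nontrivial (EuclideanSpace ℝ (Fin d)) := Module.nontrivial_of_finrank_pos
    (R := ℝ) (by rw [finrank_euclideanSpace_fin]; exact hd)
  have hβ0 : (0:ℝ) < β := lt_of_le_of_lt (by positivity) hβ
  open Set Metric ENNReal in
  -- pointwise bound
  have hjb : ∀ y : EuclideanSpace ℝ (Fin d),
      jb y ^ (-β) = (1 + ‖y‖ ^ 2) ^ (-β / 2) := by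
    intro y
    rw [jb, ← Real.rpow_mul (by positivity)]
    congr 1; ring
  have hpt : ∀ y : EuclideanSpace ℝ (Fin d),
      ENNReal.ofReal (jb y ^ (-β) * ‖x - y‖ ^ (-α))
        ≤ (Metric.ball x 1).indicator (fun y => ENNReal.ofReal (‖x - y‖ ^ (-α))) y
          + ENNReal.ofReal ((1 + ‖y‖ ^ 2) ^ (-β / 2)) := by
    intro y
    have hjb1 : (1:ℝ) ≤ jb y := Real.one_le_rpow (by nlinarith [sq_nonneg ‖y‖]) (by norm_num)
    have hnn : 0 ≤ ‖x - y‖ ^ (-α) := Real.rpow_nonneg (norm_nonneg _) _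
    rcases lt_or_ge ‖x - y‖ 1 with h | h
    · have hy : y ∈ Metric.ball x 1 := by
        rwa [Metric.mem_ball, dist_eq_norm, ← norm_sub_rev]
      have hle : ENNReal.ofReal (jb y ^ (-β) * ‖x - y‖ ^ (-α))
          ≤ ENNReal.ofReal (‖x - y‖ ^ (-α)) := by
        apply ENNReal.ofReal_le_ofReal
        calc jb y ^ (-β) * ‖x - y‖ ^ (-α) ≤ 1 * ‖x - y‖ ^ (-α) :=
              mul_le_mul_of_nonneg_right
                (Real.rpow_le_one_of_one_le_of_nonpos hjb1 (by linarith)) hnn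
          _ = ‖x - y‖ ^ (-α) := one_mul _
      rw [Set.indicator_of_mem hy]
      exact le_trans hle (le_add_right le_rfl)
    · have hle : ENNReal.ofReal (jb y ^ (-β) * ‖x - y‖ ^ (-α))
          ≤ ENNReal.ofReal ((1 + ‖y‖ ^ 2) ^ (-β / 2)) := by
        rw [← hjb y]
        apply ENNReal.ofReal_le_ofReal
        calc jb y ^ (-β) * ‖x - y‖ ^ (-α) ≤ jb y ^ (-β) * 1 :=
              mul_le_mul_of_nonneg_left
                (Real.rpow_le_one_of_one_le_of_nonpos h (by linarith))
                (Real.rpow_nonneg (by positivity) _)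
          _ = jb y ^ (-β) := mul_one _
      exact le_trans hle (le_add_left le_rfl)
  have hG1meas : Measurable fun y : EuclideanSpace ℝ (Fin d) =>
      (Metric.ball x 1).indicator (fun y => ENNReal.ofReal (‖x - y‖ ^ (-α))) y := by
    apply Measurable.indicator _ measurableSet_ball
    fun_prop
  -- evaluation of the singular part
  have hA : ∫⁻ y : EuclideanSpace ℝ (Fin d),
      (Metric.ball x 1).indicator (fun y => ENNReal.ofReal (‖x - y‖ ^ (-α))) y
      = (d : ℝ≥0∞) * volume (ball (0 : EuclideanSpace ℝ (Fin d)) 1) *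
        ENNReal.ofReal (1 / ((d:ℝ) - α)) := by
    rw [lintegral_indicator measurableSet_ball]
    have hT : MeasurePreserving (fun z : EuclideanSpace ℝ (Fin d) => x - z) volume volume :=
      Measure.measurePreserving_sub_left volume x
    have hemb : MeasurableEmbedding (fun z : EuclideanSpace ℝ (Fin d) => x - z) :=
      (MeasurableEquiv.subLeft x).measurableEmbedding
    have hpre : (fun z : EuclideanSpace ℝ (Fin d) => x - z) ⁻¹' (Metric.ball x 1)
        = Metric.ball (0 : EuclideanSpace ℝ (Fin d)) 1 := by
      ext z
      simp [Metric.mem_ball, dist_eq_norm, sub_sub_cancel_left]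
    have htrans : ∫⁻ y in Metric.ball x 1, ENNReal.ofReal (‖x - y‖ ^ (-α))
        = ∫⁻ z in Metric.ball (0 : EuclideanSpace ℝ (Fin d)) 1,
            ENNReal.ofReal (‖z‖ ^ (-α)) := by
      rw [← hT.setLIntegral_comp_preimage_emb hemb
        (fun y => ENNReal.ofReal (‖x - y‖ ^ (-α))) (Metric.ball x 1), hpre]
      apply lintegral_congr
      intro z
      rw [_root_.sub_sub_cancel]
    rw [htrans]
    have hf1m : Measurable fun r : ℝ =>
        (Iio (1:ℝ)).indicator (fun r => ENNReal.ofReal (r ^ (-α))) r := by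
      apply Measurable.indicator _ measurableSet_Iio
      fun_prop
    have hind : ∫⁻ z in Metric.ball (0 : EuclideanSpace ℝ (Fin d)) 1,
        ENNReal.ofReal (‖z‖ ^ (-α))
        = ∫⁻ z : EuclideanSpace ℝ (Fin d),
            (Iio (1:ℝ)).indicator (fun r => ENNReal.ofReal (r ^ (-α))) ‖z‖ := by
      rw [← lintegral_indicator measurableSet_ball]
      apply lintegral_congr
      intro z
      by_cases hz : ‖z‖ < 1
      · rw [Set.indicator_of_mem (mem_ball_zero_iff.2 hz),
          Set.indicator_of_mem (mem_Iio.2 hz)]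
      · rw [Set.indicator_of_notMem (fun hmem => hz (mem_ball_zero_iff.1 hmem)),
          Set.indicator_of_notMem (fun hmem => hz (mem_Iio.1 hmem))]
    rw [hind, my_lintegral_fun_norm_addHaar volume
      (fun r => (Iio (1:ℝ)).indicator (fun r => ENNReal.ofReal (r ^ (-α))) r) hf1m,
      finrank_euclideanSpace_fin]
    have hrad : ∫⁻ y in Ioi (0:ℝ), ENNReal.ofReal (y ^ (d - 1)) *
        (Iio (1:ℝ)).indicator (fun r => ENNReal.ofReal (r ^ (-α))) y
        = ENNReal.ofReal (1 / ((d:ℝ) - α)) := by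
      calc ∫⁻ y in Ioi (0:ℝ), ENNReal.ofReal (y ^ (d - 1)) *
            (Iio (1:ℝ)).indicator (fun r => ENNReal.ofReal (r ^ (-α))) y
          = ∫⁻ y in Ioi (0:ℝ), (Iio (1:ℝ)).indicator
              (fun y => ENNReal.ofReal (y ^ (d - 1)) * ENNReal.ofReal (y ^ (-α))) y := by
            apply lintegral_congr
            intro y
            by_cases hy : y ∈ Iio (1:ℝ)
            · rw [Set.indicator_of_mem hy, Set.indicator_of_mem hy]
            · rw [Set.indicator_of_notMem hy, Set.indicator_of_notMem hy, mul_zero]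
        _ = ∫⁻ y in Ioo (0:ℝ) 1,
              ENNReal.ofReal (y ^ (d - 1)) * ENNReal.ofReal (y ^ (-α)) := by
            rw [lintegral_indicator measurableSet_Iio,
              Measure.restrict_restrict measurableSet_Iio]
            congr 1
            rw [Set.Iio_inter_Ioi]
        _ = ∫⁻ y in Ioo (0:ℝ) 1, ENNReal.ofReal (y ^ ((d:ℝ) - 1 - α)) := by
            apply setLIntegral_congr_fun measurableSet_Ioo
            intro y hy
            have hy0 : (0:ℝ) < y := hy.1
            beta_reduce
            rw [← ENNReal.ofReal_mul (by positivity), ← Real.rpow_natCast y (d - 1),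
              ← Real.rpow_add hy0]
            congr 2
            rw [Nat.cast_sub hd]
            push_cast
            ring
        _ = ENNReal.ofReal (1 / ((d:ℝ) - α)) := my_segment_eval d α hαd
    rw [hrad]
  -- bound for the tail part
  have hm2 : Measurable fun r : ℝ => ENNReal.ofReal ((1 + r ^ 2) ^ (-β / 2)) := by fun_prop
  have hB : ∫⁻ y : EuclideanSpace ℝ (Fin d), ENNReal.ofReal ((1 + ‖y‖ ^ 2) ^ (-β / 2))
      = (d : ℝ≥0∞) * volume (ball (0 : EuclideanSpace ℝ (Fin d)) 1) *
        ENNReal.ofReal (∫ r in Set.Ioi (0:ℝ), r ^ ((d:ℝ) - 1) * (1 + r ^ 2) ^ (-β / 2)) := by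
    rw [my_lintegral_fun_norm_addHaar volume
      (fun r : ℝ => ENNReal.ofReal ((1 + r ^ 2) ^ (-β / 2))) hm2,
      finrank_euclideanSpace_fin]
    have hrad : ∫⁻ y in Ioi (0:ℝ), ENNReal.ofReal (y ^ (d - 1)) *
        ENNReal.ofReal ((1 + y ^ 2) ^ (-β / 2))
        = ENNReal.ofReal (∫ r in Set.Ioi (0:ℝ), r ^ ((d:ℝ) - 1) * (1 + r ^ 2) ^ (-β / 2)) := by
      calc ∫⁻ y in Ioi (0:ℝ), ENNReal.ofReal (y ^ (d - 1)) *
            ENNReal.ofReal ((1 + y ^ 2) ^ (-β / 2))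
          = ∫⁻ y in Ioi (0:ℝ),
              ENNReal.ofReal (y ^ ((d:ℝ) - 1) * (1 + y ^ 2) ^ (-β / 2)) := by
            apply setLIntegral_congr_fun measurableSet_Ioi
            intro y hy
            have hy0 : (0:ℝ) < y := hy
            beta_reduce
            rw [← ENNReal.ofReal_mul (by positivity), ← Real.rpow_natCast y (d - 1)]
            congr 2
            rw [Nat.cast_sub hd]
            push_cast
            ring
        _ = ENNReal.ofReal (∫ r in Set.Ioi (0:ℝ),
              r ^ ((d:ℝ) - 1) * (1 + r ^ 2) ^ (-β / 2)) := by
            rw [← ofReal_integral_eq_lintegral_ofReal (my_oneD_integrable d hd β hβ)]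
            filter_upwards [ae_restrict_mem measurableSet_Ioi] with y hy
            have : (0:ℝ) < y := hy
            positivity
    rw [hrad]
  -- assemble
  have hInonneg : 0 ≤ ∫ r in Set.Ioi (0:ℝ), r ^ ((d:ℝ) - 1) * (1 + r ^ 2) ^ (-β / 2) := by
    apply setIntegral_nonneg measurableSet_Ioi
    intro y hy
    have : (0:ℝ) < y := hy
    positivity
  have hKnn : 0 ≤ 2 * Real.pi ^ ((d : ℝ) / 2) / Real.Gamma ((d : ℝ) / 2) := by
    have := Real.Gamma_pos_of_pos (show (0:ℝ) < (d:ℝ)/2 by positivity)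
    positivity
  calc (∫⁻ y in ({x}ᶜ : Set (EuclideanSpace ℝ (Fin d))),
        ENNReal.ofReal (jb y ^ (-β) * ‖x - y‖ ^ (-α)))
      ≤ ∫⁻ y in ({x}ᶜ : Set (EuclideanSpace ℝ (Fin d))),
          ((Metric.ball x 1).indicator (fun y => ENNReal.ofReal (‖x - y‖ ^ (-α))) y
            + ENNReal.ofReal ((1 + ‖y‖ ^ 2) ^ (-β / 2))) := lintegral_mono fun y => hpt y
    _ ≤ ∫⁻ y : EuclideanSpace ℝ (Fin d),
          ((Metric.ball x 1).indicator (fun y => ENNReal.ofReal (‖x - y‖ ^ (-α))) y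
            + ENNReal.ofReal ((1 + ‖y‖ ^ 2) ^ (-β / 2))) := setLIntegral_le_lintegral _ _
    _ = (∫⁻ y : EuclideanSpace ℝ (Fin d),
          (Metric.ball x 1).indicator (fun y => ENNReal.ofReal (‖x - y‖ ^ (-α))) y)
        + ∫⁻ y : EuclideanSpace ℝ (Fin d), ENNReal.ofReal ((1 + ‖y‖ ^ 2) ^ (-β / 2)) :=
        lintegral_add_left hG1meas _
    _ = (d : ℝ≥0∞) * volume (ball (0 : EuclideanSpace ℝ (Fin d)) 1) *
          (ENNReal.ofReal (1 / ((d:ℝ) - α)) +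
           ENNReal.ofReal (∫ r in Set.Ioi (0:ℝ), r ^ ((d:ℝ) - 1) * (1 + r ^ 2) ^ (-β / 2))) := by
        rw [hA, hB, mul_add]
    _ = ENNReal.ofReal
          ((2 * Real.pi ^ ((d : ℝ) / 2) / Real.Gamma ((d : ℝ) / 2)) *
            (1 / ((d : ℝ) - α) +
              ∫ r in Set.Ioi (0 : ℝ), r ^ ((d : ℝ) - 1) * (1 + r ^ 2) ^ (-β / 2))) := by
        rw [my_const_eq d hd, ← ENNReal.ofReal_add (one_div_nonneg.2 (by linarith)) hInonneg,
          ← ENNReal.ofReal_mul hKnn]
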